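/- arXiv:2510.00445 — 6 statements merged into one kernel-verified Lean document; each statement's English description precedes it below -/
import Mathlib

section
/- Let H be a separable Hilbert space with orthonormal basis (e_j)_{j∈ℤ}, let α > 1 be real, and let V be the bounded linear operator on H defined by V(e_n) = α·e_{n+1} for n < 0 and V(e_n) = (1/α)·e_{n+1} for n ≥ 0. Then for every m ∈ ℕ, the operator norms ‖V^k P_m‖ tend to 0 as k → ∞, where P_m is the orthogonal projection onto span{e_{-m},...,e_m}. -/
open Filter Topology

theorem stmt0
    {H : Type*} [NormedAddCommGroup H] [InnerProductSpace ℂ H] [CompleteSpace H]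
    [TopologicalSpace.SeparableSpace H]
    (e : HilbertBasis ℤ ℂ H)
    (α : ℝ) (hα : 1 < α)
    (V : H →L[ℂ] H)
    (hV : ∀ n : ℤ, V (e n) = if n < 0 then (α : ℂ) • e (n + 1) else (α : ℂ)⁻¹ • e (n + 1))
    (P : ℕ → (H →L[ℂ] H))
    (hP₁ : ∀ (m : ℕ) (j : ℤ), |j| ≤ (m : ℤ) → P m (e j) = e j)
    (hP₂ : ∀ (m : ℕ) (j : ℤ), (m : ℤ) < |j| → P m (e j) = 0) :
    ∀ m : ℕ, Tendsto (fun k : ℕ => ‖(V ^ k) * P m‖) atTop (𝓝 0) := by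
  have hα0 : (0:ℝ) < α := lt_trans one_pos hα
  have hα1 : (1:ℝ) ≤ α := hα.le
  -- key bound on basis vectors
  have hVk : ∀ (k : ℕ) (j : ℤ), ‖(V ^ k) (e j)‖ ≤ α ^ (2 * (-j).toNat) * (α⁻¹) ^ k := by
    intro k
    induction k with
    | zero =>
      intro j
      simp only [pow_zero, ContinuousLinearMap.one_apply, mul_one]
      rw [e.orthonormal.1 j]
      exact one_le_pow₀ hα1
    | succ k ih =>
      intro j
      have hsp : (V ^ (k+1)) (e j) = (V ^ k) (V (e j)) := by
        rw [pow_succ]; rfl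
      rw [hsp, hV j]
      by_cases hj : j < 0
      · rw [if_pos hj]
        have hnorm : ‖(V ^ k) ((α : ℂ) • e (j+1))‖ = α * ‖(V ^ k) (e (j+1))‖ := by
          rw [map_smul, norm_smul]
          simp [abs_of_pos hα0]
        rw [hnorm]
        have h1 : α * ‖(V ^ k) (e (j+1))‖ ≤ α * (α ^ (2 * (-(j+1)).toNat) * (α⁻¹) ^ k) :=
          mul_le_mul_of_nonneg_left (ih (j+1)) hα0.le
        refine h1.trans (le_of_eq ?_)
        have ht : (-j).toNat = (-(j+1)).toNat + 1 := by omega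
        rw [ht]
        linear_combination (-(α * α ^ (2 * (-(j+1)).toNat) * α⁻¹ ^ k)) * mul_inv_cancel₀ hα0.ne'
      · rw [if_neg hj]
        have hnorm : ‖(V ^ k) ((α : ℂ)⁻¹ • e (j+1))‖ = α⁻¹ * ‖(V ^ k) (e (j+1))‖ := by
          rw [map_smul, norm_smul]
          simp [abs_of_pos hα0]
        rw [hnorm]
        have ht1 : (-(j+1)).toNat = 0 := by omega
        have ht2 : (-j).toNat = 0 := by omega
        have h1 : α⁻¹ * ‖(V ^ k) (e (j+1))‖ ≤ α⁻¹ * (α ^ (2 * (-(j+1)).toNat) * (α⁻¹) ^ k) :=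
          mul_le_mul_of_nonneg_left (ih (j+1)) (by positivity)
        refine h1.trans (le_of_eq ?_)
        rw [ht1, ht2]
        ring
  intro m
  set s : Finset ℤ := Finset.Icc (-(m:ℤ)) m with hs
  set C : ℝ := (s.card : ℝ) * α ^ (2 * m) with hC
  have hCnn : 0 ≤ C := by positivity
  -- expansion of P m x
  have hPx : ∀ x : H, P m x = ∑ j ∈ s, e.repr x j • e j := by
    intro x
    have h1 : HasSum (fun j : ℤ => (P m) (e.repr x j • e j)) (P m x) :=
      (e.hasSum_repr x).mapL (P m)
    have h2 : HasSum (fun j : ℤ => e.repr x j • (P m) (e j)) (P m x) := by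
      simpa [map_smul] using h1
    have h3 : HasSum (fun j : ℤ => e.repr x j • (P m) (e j))
        (∑ j ∈ s, e.repr x j • (P m) (e j)) := by
      apply hasSum_sum_of_ne_finset_zero
      intro j hj
      have : (m : ℤ) < |j| := by
        simp only [hs, Finset.mem_Icc] at hj
        rw [lt_abs]
        omega
      rw [hP₂ m j this, smul_zero]
    have h4 : P m x = ∑ j ∈ s, e.repr x j • (P m) (e j) := h2.unique h3
    rw [h4]
    apply Finset.sum_congr rfl
    intro j hj
    have : |j| ≤ (m : ℤ) := by
      simp only [hs, Finset.mem_Icc] at hj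
      rw [abs_le]
      exact hj
    rw [hP₁ m j this]
  -- operator norm bound
  have key : ∀ k : ℕ, ‖(V ^ k) * P m‖ ≤ C * (α⁻¹) ^ k := by
    intro k
    apply ContinuousLinearMap.opNorm_le_bound _ (by positivity)
    intro x
    have hVx : ((V ^ k) * P m) x = ∑ j ∈ s, e.repr x j • (V ^ k) (e j) := by
      rw [ContinuousLinearMap.mul_apply, hPx x, map_sum]
      simp [map_smul]
    rw [hVx]
    calc ‖∑ j ∈ s, e.repr x j • (V ^ k) (e j)‖
        ≤ ∑ j ∈ s, ‖e.repr x j • (V ^ k) (e j)‖ := norm_sum_le _ _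
      _ ≤ ∑ j ∈ s, (α ^ (2 * m) * (α⁻¹) ^ k) * ‖x‖ := by
          apply Finset.sum_le_sum
          intro j hj
          rw [norm_smul]
          have hjm : (-j).toNat ≤ m := by
            simp only [hs, Finset.mem_Icc] at hj
            omega
          have hb1 : ‖(V ^ k) (e j)‖ ≤ α ^ (2 * m) * (α⁻¹) ^ k := by
            refine (hVk k j).trans ?_
            apply mul_le_mul_of_nonneg_right _ (by positivity)
            exact pow_le_pow_right₀ hα1 (by omega)
          have hb2 : ‖e.repr x j‖ ≤ ‖x‖ := by
            rw [e.repr_apply_apply]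
            simpa [e.orthonormal.1 j] using norm_inner_le_norm (𝕜 := ℂ) (e j) x
          calc ‖e.repr x j‖ * ‖(V ^ k) (e j)‖
              ≤ ‖x‖ * (α ^ (2 * m) * (α⁻¹) ^ k) :=
                mul_le_mul hb2 hb1 (norm_nonneg _) (norm_nonneg _)
            _ = (α ^ (2 * m) * (α⁻¹) ^ k) * ‖x‖ := by ring
      _ = C * (α⁻¹) ^ k * ‖x‖ := by
          simp only [Finset.sum_const, nsmul_eq_mul, hC]
          ring
  -- squeeze
  have hlim : Tendsto (fun k : ℕ => C * (α⁻¹) ^ k) atTop (𝓝 0) := by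
    have h0 : Tendsto (fun k : ℕ => (α⁻¹) ^ k) atTop (𝓝 0) :=
      tendsto_pow_atTop_nhds_zero_of_lt_one (by positivity) (inv_lt_one_of_one_lt₀ hα)
    simpa using h0.const_mul C
  exact squeeze_zero (fun k => norm_nonneg _) key hlim
end

section
/- Let H be a separable Hilbert space with orthonormal basis (e_j)_{j∈ℤ}, let α > 1, and let V be defined by V(e_n) = α·e_{n+1} for n < 0 and V(e_n) = (1/α)·e_{n+1} for n ≥ 0. Then V is invertible and for every m ∈ ℕ, ‖V^{-k} P_m‖ → 0 as k → ∞. -/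
open Filter Topology
open scoped ENNReal

set_option maxHeartbeats 1000000

noncomputable section
namespace Stmt1Aux

lemma mem (c : ℤ → ℂ) (C : ℝ) (hc : ∀ n, ‖c n‖ ≤ C) (f : lp (fun _ : ℤ => ℂ) 2) :
    Memℓp (fun n : ℤ => c n * f (n + 1)) 2 := by
  have h2 : (0:ℝ) < (2 : ℝ≥0∞).toReal := by norm_num
  have hs : Summable fun n : ℤ => ‖f n‖ ^ (2 : ℝ≥0∞).toReal :=
    (lp.memℓp f).summable h2
  have hs1 : Summable fun n : ℤ => ‖f (n + 1)‖ ^ (2 : ℝ≥0∞).toReal :=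
    ((Equiv.addRight (1:ℤ)).summable_iff).2 hs
  have hs2 : Summable fun n : ℤ => C ^ (2 : ℝ≥0∞).toReal * ‖f (n + 1)‖ ^ (2 : ℝ≥0∞).toReal :=
    hs1.mul_left _
  refine memℓp_gen ?_
  refine Summable.of_nonneg_of_le (fun n => ?_) (fun n => ?_) hs2
  · positivity
  · rw [← Real.mul_rpow ((norm_nonneg (c 0)).trans (hc 0)) (norm_nonneg _)]
    refine Real.rpow_le_rpow (norm_nonneg _) ?_ (by norm_num)
    exact (norm_mul_le _ _).trans (by gcongr; exact hc n)

def TL (c : ℤ → ℂ) (C : ℝ) (hc : ∀ n, ‖c n‖ ≤ C) :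
    lp (fun _ : ℤ => ℂ) 2 →ₗ[ℂ] lp (fun _ : ℤ => ℂ) 2 where
  toFun f := ⟨fun n => c n * f (n + 1), mem c C hc f⟩
  map_add' f g := by
    apply lp.ext
    funext n
    simp only [lp.coeFn_add, Pi.add_apply]
    show c n * (f + g) (n + 1) = _
    rw [lp.coeFn_add, Pi.add_apply]
    ring
  map_smul' r f := by
    apply lp.ext
    funext n
    simp only [RingHom.id_apply, lp.coeFn_smul, Pi.smul_apply]
    show c n * (r • f) (n + 1) = r • (c n * f (n + 1))
    rw [lp.coeFn_smul, Pi.smul_apply, smul_eq_mul, smul_eq_mul]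
    ring

lemma TL_norm (c : ℤ → ℂ) (C : ℝ) (hc : ∀ n, ‖c n‖ ≤ C) (hC : 0 ≤ C)
    (f : lp (fun _ : ℤ => ℂ) 2) :
    ‖TL c C hc f‖ ≤ C * ‖f‖ := by
  refine lp.norm_le_of_tsum_le (p := 2) (by norm_num) (by positivity) ?_
  have hs : Summable fun n : ℤ => ‖f n‖ ^ (2 : ℝ≥0∞).toReal :=
    (lp.memℓp f).summable (by norm_num)
  have hs1 : Summable fun n : ℤ => ‖f (n + 1)‖ ^ (2 : ℝ≥0∞).toReal :=
    ((Equiv.addRight (1:ℤ)).summable_iff).2 hs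
  have key : ∑' n : ℤ, ‖(TL c C hc f) n‖ ^ (2 : ℝ≥0∞).toReal
      ≤ ∑' n : ℤ, C ^ (2 : ℝ≥0∞).toReal * ‖f (n + 1)‖ ^ (2 : ℝ≥0∞).toReal := by
    refine Summable.tsum_le_tsum (fun n => ?_) ((mem c C hc f).summable (by norm_num)) (hs1.mul_left _)
    show ‖c n * f (n + 1)‖ ^ (2 : ℝ≥0∞).toReal ≤ _
    rw [← Real.mul_rpow hC (norm_nonneg _)]
    refine Real.rpow_le_rpow (norm_nonneg _) ?_ (by norm_num)
    exact (norm_mul_le _ _).trans (by gcongr; exact hc n)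
  refine key.trans ?_
  have ht := (Equiv.addRight (1:ℤ)).tsum_eq (fun x => ‖f x‖ ^ (2 : ℝ≥0∞).toReal)
  simp only [Equiv.coe_addRight] at ht
  rw [tsum_mul_left, ht, ← lp.norm_rpow_eq_tsum (by norm_num) f,
    Real.mul_rpow hC (norm_nonneg _)]

def T (c : ℤ → ℂ) (C : ℝ) (hc : ∀ n, ‖c n‖ ≤ C) (hC : 0 ≤ C) :
    lp (fun _ : ℤ => ℂ) 2 →L[ℂ] lp (fun _ : ℤ => ℂ) 2 :=
  (TL c C hc).mkContinuous C (TL_norm c C hc hC)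

lemma T_apply (c : ℤ → ℂ) (C : ℝ) (hc : ∀ n, ‖c n‖ ≤ C) (hC : 0 ≤ C)
    (f : lp (fun _ : ℤ => ℂ) 2) (n : ℤ) : (T c C hc hC f) n = c n * f (n + 1) := rfl

lemma T_single (c : ℤ → ℂ) (C : ℝ) (hc : ∀ n, ‖c n‖ ≤ C) (hC : 0 ≤ C) (j : ℤ) :
    T c C hc hC (lp.single 2 j 1) = c (j - 1) • lp.single 2 (j - 1) (1 : ℂ) := by
  apply lp.ext
  funext n
  rw [lp.coeFn_smul, Pi.smul_apply, T_apply]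
  rcases eq_or_ne n (j - 1) with h | h
  · subst h
    rw [sub_add_cancel, lp.single_apply_self, lp.single_apply_self, smul_eq_mul]
  · rw [lp.single_apply_ne _ _ _ (by omega : n + 1 ≠ j), lp.single_apply_ne _ _ _ h]
    simp

end Stmt1Aux


set_option maxHeartbeats 1000000 in
theorem stmt1
    {H : Type*} [NormedAddCommGroup H] [InnerProductSpace ℂ H] [CompleteSpace H]
    [TopologicalSpace.SeparableSpace H]
    (e : HilbertBasis ℤ ℂ H)
    (α : ℝ) (hα : 1 < α)
    (V : H →L[ℂ] H)
    (hV : ∀ n : ℤ, V (e n) = if n < 0 then (α : ℂ) • e (n + 1) else (α : ℂ)⁻¹ • e (n + 1))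
    (P : ℕ → (H →L[ℂ] H))
    (hP₁ : ∀ (m : ℕ) (j : ℤ), |j| ≤ (m : ℤ) → P m (e j) = e j)
    (hP₂ : ∀ (m : ℕ) (j : ℤ), (m : ℤ) < |j| → P m (e j) = 0) :
    ∃ Vinv : H →L[ℂ] H, V * Vinv = 1 ∧ Vinv * V = 1 ∧
      ∀ m : ℕ, Tendsto (fun k : ℕ => ‖(Vinv ^ k) * P m‖) atTop (𝓝 0) := by
  classical
  have hα0 : (0:ℝ) < α := lt_trans one_pos hα
  have hαC : (α : ℂ) ≠ 0 := by exact_mod_cast hα0.ne'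
  set c : ℤ → ℂ := fun n => if n < 0 then (α:ℂ)⁻¹ else (α:ℂ) with hc_def
  have hnormα : ‖(α:ℂ)‖ = α := by
    rw [Complex.norm_real, Real.norm_eq_abs, abs_of_pos hα0]
  have hnormαinv : ‖(α:ℂ)⁻¹‖ = α⁻¹ := by rw [norm_inv, hnormα]
  have hcbound : ∀ n, ‖c n‖ ≤ α := by
    intro n
    simp only [hc_def]
    split
    · rw [hnormαinv]
      exact le_trans (inv_lt_one_of_one_lt₀ hα).le hα.le
    · rw [hnormα]
  set T := Stmt1Aux.T c α hcbound hα0.le with hT_def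
  set Vinv : H →L[ℂ] H :=
    (e.repr.symm.toLinearIsometry.toContinuousLinearMap).comp
      (T.comp e.repr.toLinearIsometry.toContinuousLinearMap) with hVinv_def
  have hVinv_apply : ∀ x : H, Vinv x = e.repr.symm (T (e.repr x)) := fun x => rfl
  have hVinv_e : ∀ j : ℤ, Vinv (e j) = c (j - 1) • e (j - 1) := by
    intro j
    rw [hVinv_apply, e.repr_self, hT_def, Stmt1Aux.T_single, map_smul, e.repr_symm_single]
  have ext_basis : ∀ (f g : H →L[ℂ] H), (∀ j : ℤ, f (e j) = g (e j)) → f = g := by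
    intro f g h
    refine ContinuousLinearMap.ext_on (s := Set.range (⇑e))
      (Submodule.dense_iff_topologicalClosure_eq_top.2 e.dense_span) ?_
    rintro x ⟨j, rfl⟩
    exact h j
  have hcval : ∀ n : ℤ, c n = if n < 0 then (α:ℂ)⁻¹ else (α:ℂ) := fun n => rfl
  refine ⟨Vinv, ?_, ?_, ?_⟩
  · refine ext_basis _ _ fun j => ?_
    rw [ContinuousLinearMap.mul_apply, ContinuousLinearMap.one_apply, hVinv_e, map_smul,
      hV (j - 1), hcval]
    by_cases h : j - 1 < 0
    · rw [if_pos h, if_pos h, smul_smul, sub_add_cancel, inv_mul_cancel₀ hαC, one_smul]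
    · rw [if_neg h, if_neg h, smul_smul, sub_add_cancel, mul_inv_cancel₀ hαC, one_smul]
  · refine ext_basis _ _ fun n => ?_
    rw [ContinuousLinearMap.mul_apply, ContinuousLinearMap.one_apply, hV n]
    by_cases h : n < 0
    · rw [if_pos h, map_smul, hVinv_e, add_sub_cancel_right, hcval, if_pos h, smul_smul,
        mul_inv_cancel₀ hαC, one_smul]
    · rw [if_neg h, map_smul, hVinv_e, add_sub_cancel_right, hcval, if_neg h, smul_smul,
        inv_mul_cancel₀ hαC, one_smul]
  · -- the tendsto part
    have hpow : ∀ (k : ℕ) (j : ℤ),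
        (Vinv ^ k) (e j) = (∏ i ∈ Finset.range k, c (j - 1 - i)) • e (j - k) := by
      intro k
      induction k with
      | zero => intro j; simp
      | succ k ih =>
        intro j
        rw [pow_succ, ContinuousLinearMap.mul_apply, hVinv_e, map_smul, ih (j - 1), smul_smul]
        have h1 : ∀ i ∈ Finset.range k, c (j - 1 - ((i:ℕ) + 1 : ℕ)) = c (j - 1 - 1 - (i:ℤ)) := by
          intro i _
          congr 1
          push_cast
          ring
        have h2 : ∏ i ∈ Finset.range (k + 1), c (j - 1 - (i:ℤ))
            = c (j - 1) * ∏ i ∈ Finset.range k, c (j - 1 - 1 - (i:ℤ)) := by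
          rw [Finset.prod_range_succ', Finset.prod_congr rfl h1, Nat.cast_zero, sub_zero,
            mul_comm]
        have h3 : j - 1 - (k:ℤ) = j - ((k:ℕ) + 1 : ℕ) := by push_cast; ring
        rw [h2, h3]
    have hbound : ∀ (m k : ℕ) (j : ℤ), |j| ≤ (m:ℤ) →
        ‖∏ i ∈ Finset.range k, c (j - 1 - i)‖ ≤ α ^ (2 * m) * (α⁻¹) ^ k := by
      intro m k j hj
      rw [norm_prod]
      have step1 : ∏ i ∈ Finset.range k, ‖c (j - 1 - (i:ℤ))‖
          ≤ ∏ i ∈ Finset.range k, ((if (i:ℤ) < (m:ℤ) then α ^ 2 else 1) * α⁻¹) := by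
        refine Finset.prod_le_prod (fun i _ => norm_nonneg _) (fun i _ => ?_)
        rw [hcval]
        by_cases h : j - 1 - (i:ℤ) < 0
        · rw [if_pos h, hnormαinv]
          have h1 : (1:ℝ) ≤ (if (i:ℤ) < (m:ℤ) then α ^ 2 else 1) := by
            split
            · nlinarith
            · exact le_refl 1
          nlinarith [inv_pos.2 hα0]
        · have hj' := abs_le.1 hj
          have him : (i:ℤ) < (m:ℤ) := by omega
          rw [if_neg h, if_pos him, hnormα, sq]
          rw [mul_assoc, mul_inv_cancel₀ hα0.ne', mul_one]
      refine step1.trans ?_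
      rw [Finset.prod_mul_distrib, Finset.prod_const, Finset.card_range]
      refine mul_le_mul_of_nonneg_right ?_ (by positivity)
      rw [Finset.prod_ite, Finset.prod_const, Finset.prod_const, one_pow, mul_one, pow_mul]
      refine pow_le_pow_right₀ (by nlinarith) ?_
      refine le_trans (Finset.card_le_card ?_) (le_of_eq (Finset.card_range m))
      intro i hi
      simp only [Finset.mem_filter, Finset.mem_range] at hi ⊢
      exact_mod_cast hi.2
    intro m
    have hPQ : ∀ x : H, P m x = ∑ j ∈ Finset.Icc (-(m:ℤ)) (m:ℤ), e.repr x j • e j := by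
      have hQ : P m = ∑ j ∈ Finset.Icc (-(m:ℤ)) (m:ℤ),
          (innerSL ℂ (e j)).smulRight (e j) := by
        refine ext_basis _ _ fun i => ?_
        rw [ContinuousLinearMap.sum_apply]
        have : ∀ j ∈ Finset.Icc (-(m:ℤ)) (m:ℤ),
            ((innerSL ℂ (e j)).smulRight (e j)) (e i) = if j = i then e i else 0 := by
          intro j _
          rw [ContinuousLinearMap.smulRight_apply, innerSL_apply_apply,
            orthonormal_iff_ite.1 e.orthonormal j i]
          split
          · rename_i h; rw [one_smul, h]
          · rw [zero_smul]
        rw [Finset.sum_congr rfl this, Finset.sum_ite_eq' _ i fun _ => e i]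
        by_cases h : |i| ≤ (m:ℤ)
        · rw [if_pos (by rw [Finset.mem_Icc, ← abs_le]; exact h), hP₁ m i h]
        · rw [if_neg (by rw [Finset.mem_Icc, ← abs_le]; exact h), hP₂ m i (not_le.1 h)]
      intro x
      rw [hQ, ContinuousLinearMap.sum_apply]
      refine Finset.sum_congr rfl fun j _ => ?_
      rw [ContinuousLinearMap.smulRight_apply, innerSL_apply_apply, e.repr_apply_apply]
    set B : ℝ := ((Finset.Icc (-(m:ℤ)) (m:ℤ)).card : ℝ) * α ^ (2 * m) with hB_def
    have hB0 : 0 ≤ B := by positivity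
    have hnorm : ∀ k : ℕ, ‖(Vinv ^ k) * P m‖ ≤ B * (α⁻¹) ^ k := by
      intro k
      refine ContinuousLinearMap.opNorm_le_bound _ (by positivity) fun x => ?_
      rw [ContinuousLinearMap.mul_apply, hPQ x, map_sum]
      refine (norm_sum_le _ _).trans ?_
      have term : ∀ j ∈ Finset.Icc (-(m:ℤ)) (m:ℤ),
          ‖(Vinv ^ k) (e.repr x j • e j)‖ ≤ (α ^ (2 * m) * (α⁻¹) ^ k) * ‖x‖ := by
        intro j hj
        rw [map_smul, hpow k j, norm_smul, norm_smul, e.orthonormal.1 (j - k), mul_one,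
          mul_comm]
        have h1 : ‖e.repr x j‖ ≤ ‖x‖ := by
          calc ‖e.repr x j‖ ≤ ‖e.repr x‖ := lp.norm_apply_le_norm (by norm_num) _ j
          _ = ‖x‖ := e.repr.norm_map x
        have h2 := hbound m k j (abs_le.2 (Finset.mem_Icc.1 hj))
        exact mul_le_mul h2 h1 (norm_nonneg _) (by positivity)
      refine (Finset.sum_le_sum term).trans ?_
      rw [Finset.sum_const, nsmul_eq_mul]
      exact le_of_eq (by rw [hB_def]; ring)
    have hlim : Tendsto (fun k : ℕ => B * (α⁻¹) ^ k) atTop (𝓝 0) := by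
      have h1 : Tendsto (fun k : ℕ => (α⁻¹) ^ k) atTop (𝓝 0) :=
        tendsto_pow_atTop_nhds_zero_of_lt_one (inv_pos.2 hα0).le (inv_lt_one_of_one_lt₀ hα)
      simpa using h1.const_mul B
    exact squeeze_zero (fun k => norm_nonneg _) hnorm hlim
end
end

section
/- Let H be a separable Hilbert space with orthonormal basis (e_j)_{j∈ℤ}. For i > 0 define W_i by W_i(e_j) = (i/(i+1))·e_{j+1} for j ≥ 0 and W_i(e_j) = ((i+1)/i)·e_{j+1} for j < 0; set W_0 = I and W_i = W_{-i}^{-1} for i < 0. Then for every i ≥ 0, every m ∈ ℕ, and every l > m, the operator norm satisfies ‖W_{i+l} W_{i+l-1} ⋯ W_{i+1} P_m‖ = (i+m+1)^2 / ((i+1)(i+l+1)), where P_m is the orthogonal projection onto span{e_{-m},...,e_m}. -/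
open Filter Topology

noncomputable def ccR (i l : ℕ) (j : ℤ) : ℝ :=
  if 0 ≤ j then ((i:ℝ)+1)/((i:ℝ)+l+1)
  else if 0 ≤ j + l then ((i:ℝ)+1-(j:ℝ))^2/(((i:ℝ)+1)*((i:ℝ)+l+1))
  else ((i:ℝ)+l+1)/((i:ℝ)+1)

noncomputable def cc (i l : ℕ) (j : ℤ) : ℂ := ((ccR i l j : ℝ) : ℂ)

lemma ccR_nonneg (i l : ℕ) (j : ℤ) : 0 ≤ ccR i l j := by
  unfold ccR; split_ifs <;> positivity

lemma cc_norm (i l : ℕ) (j : ℤ) : ‖cc i l j‖ = ccR i l j := by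
  unfold cc
  rw [Complex.norm_real, Real.norm_eq_abs, abs_of_nonneg (ccR_nonneg i l j)]

lemma ccR_le {i m l : ℕ} (hml : m < l) {j : ℤ} (hj₁ : -(m:ℤ) ≤ j) (hj₂ : j ≤ (m:ℤ)) :
    ccR i l j ≤ ((i:ℝ)+(m:ℝ)+1)^2/(((i:ℝ)+1)*((i:ℝ)+(l:ℝ)+1)) := by
  unfold ccR
  have h1 : (0:ℝ) < (i:ℝ)+1 := by positivity
  have h2 : (0:ℝ) < (i:ℝ)+(l:ℝ)+1 := by positivity
  have hm0 : (0:ℝ) ≤ (m:ℝ) := Nat.cast_nonneg m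
  split_ifs with hj0 hjl
  · rw [div_le_div_iff₀ h2 (by positivity)]
    have hsq : ((i:ℝ)+1)^2 ≤ ((i:ℝ)+(m:ℝ)+1)^2 := by nlinarith
    nlinarith [mul_le_mul_of_nonneg_right hsq h2.le]
  · rw [div_le_div_iff₀ (by positivity) (by positivity)]
    have hjm : ((-j : ℤ) : ℝ) ≤ (m:ℝ) := by exact_mod_cast (by omega : (-j : ℤ) ≤ (m:ℤ))
    have hj0' : (0:ℝ) ≤ ((-j : ℤ) : ℝ) := by exact_mod_cast (by omega : (0:ℤ) ≤ -j)
    push_cast at hjm hj0'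
    have hsq : ((i:ℝ)+1-(j:ℝ))^2 ≤ ((i:ℝ)+(m:ℝ)+1)^2 := by nlinarith
    nlinarith [mul_le_mul_of_nonneg_right hsq (show (0:ℝ) ≤ ((i:ℝ)+1)*((i:ℝ)+(l:ℝ)+1) by positivity)]
  · exfalso; omega

theorem stmt2
    {H : Type*} [NormedAddCommGroup H] [InnerProductSpace ℂ H] [CompleteSpace H]
    [TopologicalSpace.SeparableSpace H]
    (e : HilbertBasis ℤ ℂ H)
    (W : ℤ → (H →L[ℂ] H))
    (hW0 : W 0 = 1)
    (hWpos : ∀ i : ℤ, 0 < i → ∀ j : ℤ,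
      W i (e j) = if 0 ≤ j then (((i : ℂ)) / ((i : ℂ) + 1)) • e (j + 1)
        else ((((i : ℂ) + 1)) / (i : ℂ)) • e (j + 1))
    (hWneg : ∀ i : ℤ, i < 0 → W i * W (-i) = 1 ∧ W (-i) * W i = 1)
    (P : ℕ → (H →L[ℂ] H))
    (hP₁ : ∀ (m : ℕ) (j : ℤ), |j| ≤ (m : ℤ) → P m (e j) = e j)
    (hP₂ : ∀ (m : ℕ) (j : ℤ), (m : ℤ) < |j| → P m (e j) = 0) :
    ∀ (i m l : ℕ), m < l →
      ‖(((List.range l).map (fun t : ℕ => W ((i : ℤ) + (l : ℤ) - (t : ℤ)))).prod) * P m‖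
        = ((i : ℝ) + (m : ℝ) + 1) ^ 2 / (((i : ℝ) + 1) * ((i : ℝ) + (l : ℝ) + 1)) := by
  have key : ∀ (l i : ℕ) (j : ℤ),
      (((List.range l).map (fun t : ℕ => W ((i : ℤ) + (l : ℤ) - (t : ℤ)))).prod) (e j)
        = cc i l j • e (j + l) := by
    intro l
    induction l with
    | zero =>
      intro i j
      have h0 : ccR i 0 j = 1 := by
        unfold ccR
        have hd : ((i:ℝ)+((0:ℕ):ℝ)+1) = (i:ℝ)+1 := by norm_num
        split_ifs with h h2
        · rw [hd, div_self (by positivity)]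
        · exfalso; omega
        · rw [hd, div_self (by positivity)]
      have h1 : cc i 0 j = 1 := by unfold cc; rw [h0]; norm_num
      simp [h1]
    | succ n ih =>
      intro i j
      have hsplit :
          ((List.range (n+1)).map (fun t : ℕ => W ((i : ℤ) + ((n+1 : ℕ) : ℤ) - (t : ℤ)))).prod
          = (((List.range n).map
              (fun t : ℕ => W (((i+1 : ℕ) : ℤ) + (n : ℤ) - (t : ℤ)))).prod) * W ((i:ℤ)+1) := by
        rw [List.range_succ, List.map_append, List.prod_append]
        congr 1
        · congr 1
          apply List.map_congr_left
          intro t ht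
          congr 1
          push_cast; ring
        · simp only [List.map_cons, List.map_nil, List.prod_cons, List.prod_nil, mul_one]
          congr 1
          push_cast; ring
      rw [hsplit, ContinuousLinearMap.mul_apply,
        hWpos ((i:ℤ)+1) (by positivity) j]
      have hne1 : ((i:ℂ)+1) ≠ 0 := by
        have : ((i:ℝ)+1) ≠ 0 := by positivity
        exact_mod_cast this
      have hne2 : ((i:ℂ)+1+1) ≠ 0 := by
        have : ((i:ℝ)+1+1) ≠ 0 := by positivity
        exact_mod_cast this
      have hne3 : ((i:ℂ)+1+(n:ℂ)+1) ≠ 0 := by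
        have : ((i:ℝ)+1+(n:ℝ)+1) ≠ 0 := by positivity
        exact_mod_cast this
      have hne4 : ((i:ℂ)+((n:ℂ)+1)+1) ≠ 0 := by
        have : ((i:ℝ)+((n:ℝ)+1)+1) ≠ 0 := by positivity
        exact_mod_cast this
      have harg : j + 1 + (n:ℤ) = j + ((n+1:ℕ):ℤ) := by push_cast; ring
      by_cases hj : 0 ≤ j
      · rw [if_pos hj, map_smul, ih (i+1) (j+1), smul_smul, harg]
        congr 1
        unfold cc ccR
        rw [if_pos (by omega : (0:ℤ) ≤ j + 1), if_pos hj]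
        push_cast
        field_simp
        ring
      · rw [if_neg hj, map_smul, ih (i+1) (j+1), smul_smul, harg]
        congr 1
        unfold cc ccR
        by_cases hj1 : 0 ≤ j + 1
        · rw [if_pos hj1, if_neg hj, if_pos (by omega : (0:ℤ) ≤ j + ((n+1:ℕ):ℤ))]
          have hj' : j = -1 := by omega
          subst hj'
          push_cast
          field_simp
          ring
        · rw [if_neg hj1, if_neg hj]
          by_cases hjl : 0 ≤ j + 1 + (n:ℤ)
          · rw [if_pos hjl, if_pos (by omega : (0:ℤ) ≤ j + ((n+1:ℕ):ℤ))]
            push_cast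
            field_simp
            ring
          · rw [if_neg hjl, if_neg (by omega : ¬ (0:ℤ) ≤ j + ((n+1:ℕ):ℤ))]
            push_cast
            field_simp
            ring
  intro i m l hml
  set A := (((List.range l).map (fun t : ℕ => W ((i : ℤ) + (l : ℤ) - (t : ℤ)))).prod) * P m
    with hA
  set cmax : ℝ := ((i : ℝ) + (m : ℝ) + 1) ^ 2 / (((i : ℝ) + 1) * ((i : ℝ) + (l : ℝ) + 1))
    with hcm
  have hcm0 : 0 ≤ cmax := by rw [hcm]; positivity
  have hGe : ∀ j : ℤ, |j| ≤ (m:ℤ) → A (e j) = cc i l j • e (j + l) := by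
    intro j hj
    rw [hA, ContinuousLinearMap.mul_apply, hP₁ m j hj, key l i j]
  have hGe0 : ∀ j : ℤ, (m:ℤ) < |j| → A (e j) = 0 := by
    intro j hj
    rw [hA, ContinuousLinearMap.mul_apply, hP₂ m j hj, map_zero]
  set S : Finset ℤ := Finset.Icc (-(m:ℤ)) (m:ℤ) with hS
  have hAx : ∀ x : H, A x = ∑ j ∈ S, (e.repr x j * cc i l j) • e (j + l) := by
    intro x
    have h1 : HasSum (fun j : ℤ => e.repr x j • e j) x := e.hasSum_repr x
    have h2 : HasSum (fun j : ℤ => e.repr x j • A (e j)) (A x) := by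
      simpa only [map_smul] using h1.mapL A
    have h3 : HasSum (fun j : ℤ => e.repr x j • A (e j))
        (∑ j ∈ S, e.repr x j • A (e j)) := by
      apply hasSum_sum_of_ne_finset_zero
      intro j hj
      have hj' : (m:ℤ) < |j| := by
        by_contra h
        push_neg at h
        exact hj (Finset.mem_Icc.mpr (abs_le.mp h))
      rw [hGe0 j hj', smul_zero]
    rw [h2.unique h3]
    apply Finset.sum_congr rfl
    intro j hj
    rw [hGe j (abs_le.mpr (Finset.mem_Icc.mp hj)), smul_smul]
  have horth : Orthonormal ℂ (fun j : ℤ => e (j + (l:ℤ))) :=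
    e.orthonormal.comp (fun j : ℤ => j + (l:ℤ)) (add_left_injective (l:ℤ))
  have hnormsum : ∀ (c : ℤ → ℂ), ‖∑ j ∈ S, c j • e (j + (l:ℤ))‖^2 = ∑ j ∈ S, ‖c j‖^2 := by
    intro c
    have := horth.orthogonalFamily.norm_sum c S
    simpa only [LinearIsometry.toSpanSingleton_apply] using this
  have hbessel : ∀ x : H, ∑ j ∈ S, ‖e.repr x j‖^2 ≤ ‖x‖^2 := by
    intro x
    have := e.orthonormal.sum_inner_products_le (x := x) (s := S)
    simpa only [← HilbertBasis.repr_apply_apply] using this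
  have hub : ∀ x : H, ‖A x‖ ≤ cmax * ‖x‖ := by
    intro x
    have hx2 : ‖A x‖^2 ≤ (cmax * ‖x‖)^2 := by
      rw [hAx x, hnormsum]
      have hb : ∑ j ∈ S, ‖e.repr x j * cc i l j‖^2 ≤ ∑ j ∈ S, cmax^2 * ‖e.repr x j‖^2 := by
        apply Finset.sum_le_sum
        intro j hj
        rw [norm_mul, mul_pow, cc_norm]
        obtain ⟨hj1, hj2⟩ := Finset.mem_Icc.mp hj
        have h2 : ccR i l j ≤ cmax := by rw [hcm]; exact ccR_le hml hj1 hj2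
        have h3 : 0 ≤ ccR i l j := ccR_nonneg i l j
        have h4 : ccR i l j ^ 2 ≤ cmax ^ 2 := by nlinarith
        nlinarith [mul_le_mul_of_nonneg_left h4 (sq_nonneg ‖e.repr x j‖)]
      calc ∑ j ∈ S, ‖e.repr x j * cc i l j‖^2
          ≤ ∑ j ∈ S, cmax^2 * ‖e.repr x j‖^2 := hb
        _ = cmax^2 * ∑ j ∈ S, ‖e.repr x j‖^2 := by rw [Finset.mul_sum]
        _ ≤ cmax^2 * ‖x‖^2 := by
            apply mul_le_mul_of_nonneg_left (hbessel x) (by positivity)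
        _ = (cmax * ‖x‖)^2 := by ring
    nlinarith [norm_nonneg (A x), mul_nonneg hcm0 (norm_nonneg x)]
  have hle : ‖A‖ ≤ cmax := ContinuousLinearMap.opNorm_le_bound _ hcm0 hub
  have habs : |(-(m:ℤ))| ≤ (m:ℤ) := by
    rw [abs_neg, abs_of_nonneg (Int.natCast_nonneg m)]
  have hval : ccR i l (-(m:ℤ)) = cmax := by
    rw [hcm]
    unfold ccR
    split_ifs with h1 h2
    · have hm0 : m = 0 := by omega
      subst hm0
      push_cast
      rw [div_eq_div_iff (by positivity) (by positivity)]
      ring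
    · push_cast
      ring
    · exfalso; omega
  have hem : ‖e (-(m:ℤ))‖ = 1 := e.orthonormal.1 _
  have hge : cmax ≤ ‖A‖ := by
    calc cmax = ‖A (e (-(m:ℤ)))‖ := by
          rw [hGe _ habs, norm_smul, cc_norm, hval, e.orthonormal.1, mul_one]
      _ ≤ ‖A‖ * ‖e (-(m:ℤ))‖ := A.le_opNorm _
      _ = ‖A‖ := by rw [hem, mul_one]
  exact le_antisymm hle hge
end

section
/- With W_i as in the previous context (W_i(e_j) = (i/(i+1))e_{j+1} for j≥0, ((i+1)/i)e_{j+1} for j<0 when i>0; W_0=I; W_i = W_{-i}^{-1} for i<0), for every i ∈ ℤ, every m ∈ ℕ, and every strictly increasing arithmetic-like sequence, the series ∑_{l=1}^∞ ‖W_{i+l} W_{i+l-1} ⋯ W_{i+1} P_m‖² converges. -/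
noncomputable def fW (k : ℤ) : ℝ := if 1 ≤ k then (k : ℝ) / ((k : ℝ) + 1) else 4

noncomputable def FW : ℕ → ℤ → ℝ
  | 0, _ => 1
  | (n+1), a => fW (a + 1) * FW n (a + 1)

noncomputable def GW (j : ℤ) : ℝ := (4 : ℝ) ^ ((-j).toNat)

lemma GW_pos (j : ℤ) : 0 < GW j := pow_pos (by norm_num) _

lemma GW_ge_one (j : ℤ) : 1 ≤ GW j := one_le_pow₀ (by norm_num)

lemma GW_of_nonneg {j : ℤ} (h : 0 ≤ j) : GW j = 1 := by
  unfold GW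
  rw [Int.toNat_of_nonpos (by omega), pow_zero]

lemma GW_sub_one {j : ℤ} (h : j ≤ 0) : GW (j - 1) = 4 * GW j := by
  unfold GW
  have : (-(j-1)).toNat = (-j).toNat + 1 := by omega
  rw [this, pow_succ]; ring

lemma GW_le_pow {j : ℤ} {m : ℕ} (h : -(m:ℤ) ≤ j) : GW j ≤ 4 ^ m := by
  unfold GW
  exact pow_le_pow_right₀ (by norm_num) (by omega)

lemma fW_nonneg (k : ℤ) : 0 ≤ fW k := by
  unfold fW; split
  · have hk : (1:ℝ) ≤ (k:ℝ) := by exact_mod_cast (by assumption : 1 ≤ k)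
    apply div_nonneg <;> linarith
  · norm_num

lemma fW_le_four (k : ℤ) : fW k ≤ 4 := by
  unfold fW; split
  · have hk : (1:ℝ) ≤ (k:ℝ) := by exact_mod_cast (by assumption : 1 ≤ k)
    rw [div_le_iff₀ (by linarith)]; nlinarith
  · norm_num

lemma FW_nonneg (n : ℕ) (a : ℤ) : 0 ≤ FW n a := by
  induction n generalizing a with
  | zero => exact zero_le_one
  | succ n ih => exact mul_nonneg (fW_nonneg _) (ih _)

lemma FW_eq (n : ℕ) (a : ℤ) (ha : 0 ≤ a) : FW n a = ((a:ℝ)+1)/((a:ℝ)+(n:ℝ)+1) := by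
  induction n generalizing a with
  | zero =>
    have : (a:ℝ) + 1 ≠ 0 := by positivity
    simp [FW]
    field_simp
  | succ n ih =>
    have h1 : (0:ℤ) ≤ a + 1 := by omega
    have h2 : (1:ℤ) ≤ a + 1 := by omega
    have ha' : (0:ℝ) ≤ (a:ℝ) := by exact_mod_cast ha
    show fW (a+1) * FW n (a+1) = _
    rw [ih (a+1) h1]
    unfold fW
    rw [if_pos h2]
    push_cast
    have d1 : (a:ℝ) + 1 + 1 ≠ 0 := by linarith
    have d2 : (a:ℝ) + 1 + (n:ℝ) + 1 ≠ 0 := by positivity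
    have d3 : (a:ℝ) + ((n:ℝ)+1) + 1 ≠ 0 := by positivity
    rw [div_mul_div_comm]
    rw [div_eq_div_iff (by positivity) (by positivity)]
    ring

lemma FW_le_pow (p n : ℕ) (a : ℤ) : FW (p + n) a ≤ 4 ^ p * FW n (a + (p:ℤ)) := by
  induction p generalizing a with
  | zero => simp
  | succ p ih =>
    have h : p + 1 + n = (p + n) + 1 := by omega
    rw [h]
    show fW (a+1) * FW (p+n) (a+1) ≤ _
    have h2 := ih (a + 1)
    have h3 : (a + 1) + (p:ℤ) = a + ((p:ℕ)+1 : ℕ) := by push_cast; ring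
    rw [h3] at h2
    have h4 : fW (a+1) * FW (p+n) (a+1) ≤ 4 * FW (p+n) (a+1) :=
      mul_le_mul_of_nonneg_right (fW_le_four _) (FW_nonneg _ _)
    calc fW (a+1) * FW (p+n) (a+1) ≤ 4 * FW (p+n) (a+1) := h4
      _ ≤ 4 * (4^p * FW n (a + ((p:ℕ)+1:ℕ))) := by linarith
      _ = 4^(p+1) * FW n (a + ((p:ℕ)+1:ℕ)) := by ring

section main
set_option linter.unusedSectionVars false
variable {H : Type*} [NormedAddCommGroup H] [InnerProductSpace ℂ H] [CompleteSpace H]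
    (e : HilbertBasis ℤ ℂ H) (W : ℤ → (H →L[ℂ] H))

lemma step_lem
    (hW0 : W 0 = 1)
    (hWpos : ∀ i : ℤ, 0 < i → ∀ j : ℤ,
      W i (e j) = if 0 ≤ j then (((i : ℂ)) / ((i : ℂ) + 1)) • e (j + 1)
        else ((((i : ℂ) + 1)) / (i : ℂ)) • e (j + 1))
    (hWneg : ∀ i : ℤ, i < 0 → W i * W (-i) = 1 ∧ W (-i) * W i = 1)
    (k j : ℤ) :
    ∃ (c : ℂ) (j' : ℤ), W k (e j) = c • e j' ∧ ‖c‖ * GW j' ≤ fW k * GW j := by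
  rcases lt_trichotomy k 0 with hk | hk | hk
  · -- negative case
    have hK : (0:ℤ) < -k := by omega
    have hKr : (1:ℝ) ≤ ((-k:ℤ):ℝ) := by exact_mod_cast (by omega : (1:ℤ) ≤ -k)
    have hw := hWpos (-k) hK (j - 1)
    rw [(by ring : j - 1 + 1 = j)] at hw
    have hfk : fW k = 4 := by unfold fW; rw [if_neg (by omega)]
    have h1 := (hWneg k hk).1
    have happ : W k (W (-k) (e (j-1))) = e (j-1) := by
      have := congrArg (fun (T : H →L[ℂ] H) => T (e (j-1))) h1
      simpa using this
    by_cases hj : 0 ≤ j - 1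
    · rw [if_pos hj] at hw
      set c' : ℂ := ((-k:ℤ):ℂ) / (((-k:ℤ):ℂ) + 1) with hc'def
      have hc2 : c' = ((((-k:ℤ):ℝ) / (((-k:ℤ):ℝ)+1) : ℝ) : ℂ) := by
        rw [hc'def]; push_cast; ring
      have hc' : c' ≠ 0 := by
        rw [hc2]
        simp only [ne_eq, Complex.ofReal_eq_zero]
        positivity
      rw [hw] at happ
      simp only [map_smul] at happ
      have hWk : W k (e j) = c'⁻¹ • e (j - 1) := by
        beta_reduce
        rw [← happ, smul_smul, inv_mul_cancel₀ hc', one_smul]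
      refine ⟨c'⁻¹, j - 1, hWk, ?_⟩
      rw [hfk, norm_inv, hc2, Complex.norm_real, Real.norm_eq_abs,
        abs_of_pos (by positivity), GW_of_nonneg hj, GW_of_nonneg (by omega : (0:ℤ) ≤ j),
        mul_one, mul_one, inv_div, div_le_iff₀ (by linarith)]
      nlinarith
    · push_neg at hj
      have hj0 : j ≤ 0 := by omega
      rw [if_neg (by omega)] at hw
      set c' : ℂ := (((-k:ℤ):ℂ) + 1) / ((-k:ℤ):ℂ) with hc'def
      have hc2 : c' = (((((-k:ℤ):ℝ)+1) / ((-k:ℤ):ℝ) : ℝ) : ℂ) := by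
        rw [hc'def]; push_cast; ring
      have hc' : c' ≠ 0 := by
        rw [hc2]
        simp only [ne_eq, Complex.ofReal_eq_zero]
        positivity
      rw [hw] at happ
      simp only [map_smul] at happ
      have hWk : W k (e j) = c'⁻¹ • e (j - 1) := by
        beta_reduce
        rw [← happ, smul_smul, inv_mul_cancel₀ hc', one_smul]
      refine ⟨c'⁻¹, j - 1, hWk, ?_⟩
      rw [hfk, norm_inv, hc2, Complex.norm_real, Real.norm_eq_abs,
        abs_of_pos (by positivity), GW_sub_one hj0, inv_div]
      have h5 : ((-k:ℤ):ℝ) / (((-k:ℤ):ℝ)+1) ≤ 1 := by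
        rw [div_le_one (by linarith)]; linarith
      nlinarith [GW_pos j]
  · -- k = 0
    subst hk
    refine ⟨1, j, by simp [hW0], ?_⟩
    have : fW 0 = 4 := by unfold fW; norm_num
    rw [this]; simp
    nlinarith [GW_pos j]
  · -- positive case
    have hkr : (1:ℝ) ≤ (k:ℝ) := by exact_mod_cast (by omega : (1:ℤ) ≤ k)
    have hw := hWpos k hk j
    have hfk : fW k = (k:ℝ)/((k:ℝ)+1) := by unfold fW; rw [if_pos (by omega)]
    by_cases hj : 0 ≤ j
    · rw [if_pos hj] at hw
      refine ⟨_, j + 1, hw, ?_⟩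
      have hc2 : ((k:ℤ):ℂ) / (((k:ℤ):ℂ)+1) = ((((k:ℤ):ℝ) / (((k:ℤ):ℝ)+1) : ℝ) : ℂ) := by
        push_cast; ring
      rw [hc2, Complex.norm_real, Real.norm_eq_abs, abs_of_pos (by positivity),
        GW_of_nonneg hj, GW_of_nonneg (by omega : (0:ℤ) ≤ j + 1), hfk]
    · rw [if_neg hj] at hw
      push_neg at hj
      refine ⟨_, j + 1, hw, ?_⟩
      have hc2 : (((k:ℤ):ℂ)+1) / ((k:ℤ):ℂ) = (((((k:ℤ):ℝ)+1) / ((k:ℤ):ℝ) : ℝ) : ℂ) := by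
        push_cast; ring
      rw [hc2, Complex.norm_real, Real.norm_eq_abs, abs_of_pos (by positivity), hfk]
      have hgw : GW j = 4 * GW (j + 1) := by
        have := GW_sub_one (by omega : j + 1 ≤ 0)
        rw [(by ring : j + 1 - 1 = j)] at this
        exact this
      rw [hgw]
      have key : ((k:ℝ)+1)/(k:ℝ) ≤ 4 * ((k:ℝ)/((k:ℝ)+1)) := by
        rw [(by ring : (4:ℝ) * ((k:ℝ)/((k:ℝ)+1)) = (4*(k:ℝ))/((k:ℝ)+1)),
          div_le_div_iff₀ (by linarith) (by linarith)]
        nlinarith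
      nlinarith [GW_pos (j+1), mul_le_mul_of_nonneg_right key (le_of_lt (GW_pos (j+1)))]
  

lemma chain_lem
    (hW0 : W 0 = 1)
    (hWpos : ∀ i : ℤ, 0 < i → ∀ j : ℤ,
      W i (e j) = if 0 ≤ j then (((i : ℂ)) / ((i : ℂ) + 1)) • e (j + 1)
        else ((((i : ℂ) + 1)) / (i : ℂ)) • e (j + 1))
    (hWneg : ∀ i : ℤ, i < 0 → W i * W (-i) = 1 ∧ W (-i) * W i = 1) :
    ∀ (n : ℕ) (a j : ℤ), ∃ (c : ℂ) (j' : ℤ),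
      ((List.range n).map (fun t : ℕ => W (a + (n:ℤ) - (t:ℤ)))).prod (e j) = c • e j' ∧
      ‖c‖ * GW j' ≤ FW n a * GW j := by
  intro n
  induction n with
  | zero =>
    intro a j
    exact ⟨1, j, by simp, by simp [FW]⟩
  | succ n ih =>
    intro a j
    have hL : ((List.range (n+1)).map (fun t : ℕ => W (a + ((n+1:ℕ):ℤ) - (t:ℤ)))).prod
        = ((List.range n).map (fun t : ℕ => W ((a+1) + (n:ℤ) - (t:ℤ)))).prod * W (a+1) := by
      rw [List.range_succ, List.map_append, List.prod_append]
      have hf : (fun t : ℕ => W (a + ((n+1:ℕ):ℤ) - (t:ℤ)))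
          = (fun t : ℕ => W ((a+1) + (n:ℤ) - (t:ℤ))) := by
        funext t; congr 1; push_cast; ring
      rw [hf]
      congr 1
      simp only [List.map_cons, List.map_nil, List.prod_cons, List.prod_nil, mul_one]
      congr 1
      push_cast; ring
    rw [hL]
    obtain ⟨c₀, j₁, h₀, hb₀⟩ := step_lem e W hW0 hWpos hWneg (a+1) j
    obtain ⟨c₁, j', h₁, hb₁⟩ := ih (a+1) j₁
    refine ⟨c₀ * c₁, j', ?_, ?_⟩
    · rw [ContinuousLinearMap.mul_apply, h₀, map_smul, h₁, smul_smul]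
    · have hFW : FW (n+1) a = fW (a+1) * FW n (a+1) := rfl
      rw [hFW, norm_mul]
      nlinarith [norm_nonneg c₀, norm_nonneg c₁, FW_nonneg n (a+1), GW_pos j, GW_pos j₁,
        GW_pos j', fW_nonneg (a+1),
        mul_le_mul_of_nonneg_left hb₁ (norm_nonneg c₀),
        mul_le_mul_of_nonneg_left hb₀ (FW_nonneg n (a+1))]

lemma norm_mul_P_le
    (P : ℕ → (H →L[ℂ] H))
    (hP₁ : ∀ (m : ℕ) (j : ℤ), |j| ≤ (m : ℤ) → P m (e j) = e j)
    (hP₂ : ∀ (m : ℕ) (j : ℤ), (m : ℤ) < |j| → P m (e j) = 0)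
    (m : ℕ) (T : H →L[ℂ] H) :
    ‖T * P m‖ ≤ ∑ j ∈ Finset.Icc (-(m:ℤ)) (m:ℤ), ‖T (e j)‖ := by
  have hs : ∀ x : H, P m x = ∑ j ∈ Finset.Icc (-(m:ℤ)) (m:ℤ), e.repr x j • e j := by
    intro x
    have h1 : HasSum (fun j : ℤ => e.repr x j • e j) x := e.hasSum_repr x
    have h2 := h1.mapL (P m)
    simp only [map_smul] at h2
    have h3 : ∀ j ∉ Finset.Icc (-(m:ℤ)) (m:ℤ), e.repr x j • P m (e j) = 0 := by
      intro j hj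
      simp only [Finset.mem_Icc, not_and_or, not_le] at hj
      rw [hP₂ m j (by rw [lt_abs]; omega), smul_zero]
    have h4 : HasSum (fun j : ℤ => e.repr x j • P m (e j))
        (∑ j ∈ Finset.Icc (-(m:ℤ)) (m:ℤ), e.repr x j • P m (e j)) :=
      hasSum_sum_of_ne_finset_zero h3
    have h5 := h2.unique h4
    rw [h5]
    apply Finset.sum_congr rfl
    intro j hj
    simp only [Finset.mem_Icc] at hj
    rw [hP₁ m j (by rw [abs_le]; omega)]
  apply ContinuousLinearMap.opNorm_le_bound
  · exact Finset.sum_nonneg fun j _ => norm_nonneg _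
  intro x
  rw [ContinuousLinearMap.mul_apply, hs x, map_sum]
  refine (norm_sum_le _ _).trans ?_
  rw [Finset.sum_mul]
  apply Finset.sum_le_sum
  intro j _
  rw [map_smul, norm_smul]
  have hle : ‖e.repr x j‖ ≤ ‖x‖ := by
    rw [← e.repr.norm_map x]; exact lp.norm_apply_le_norm (by norm_num) _ j
  calc ‖e.repr x j‖ * ‖T (e j)‖ ≤ ‖x‖ * ‖T (e j)‖ :=
        mul_le_mul_of_nonneg_right hle (norm_nonneg _)
    _ = ‖T (e j)‖ * ‖x‖ := by ring

end main

open Filter Topology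

theorem stmt3
    {H : Type*} [NormedAddCommGroup H] [InnerProductSpace ℂ H] [CompleteSpace H]
    [TopologicalSpace.SeparableSpace H]
    (e : HilbertBasis ℤ ℂ H)
    (W : ℤ → (H →L[ℂ] H))
    (hW0 : W 0 = 1)
    (hWpos : ∀ i : ℤ, 0 < i → ∀ j : ℤ,
      W i (e j) = if 0 ≤ j then (((i : ℂ)) / ((i : ℂ) + 1)) • e (j + 1)
        else ((((i : ℂ) + 1)) / (i : ℂ)) • e (j + 1))
    (hWneg : ∀ i : ℤ, i < 0 → W i * W (-i) = 1 ∧ W (-i) * W i = 1)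
    (P : ℕ → (H →L[ℂ] H))
    (hP₁ : ∀ (m : ℕ) (j : ℤ), |j| ≤ (m : ℤ) → P m (e j) = e j)
    (hP₂ : ∀ (m : ℕ) (j : ℤ), (m : ℤ) < |j| → P m (e j) = 0) :
    ∀ (i : ℤ) (m : ℕ),
      Summable (fun l : ℕ =>
        ‖(((List.range (l + 1)).map (fun t : ℕ => W (i + ((l : ℤ) + 1) - (t : ℤ)))).prod) * P m‖ ^ 2) := by
  intro i m
  set s : Finset ℤ := Finset.Icc (-(m:ℤ)) (m:ℤ) with hs_def
  have key : ∀ l : ℕ,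
      ‖(((List.range (l + 1)).map (fun t : ℕ => W (i + ((l : ℤ) + 1) - (t : ℤ)))).prod) * P m‖
        ≤ (s.card : ℝ) * (FW (l+1) i * 4^m) := by
    intro l
    have hfun : (fun t : ℕ => W (i + ((l:ℤ)+1) - (t:ℤ)))
        = (fun t : ℕ => W (i + ((l+1:ℕ):ℤ) - (t:ℤ))) := by
      funext t; norm_cast
    rw [hfun]
    refine (norm_mul_P_le e P hP₁ hP₂ m _).trans ?_
    have hpt : ∀ j ∈ s,
        ‖(((List.range (l + 1)).map (fun t : ℕ => W (i + ((l+1:ℕ):ℤ) - (t:ℤ)))).prod) (e j)‖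
          ≤ FW (l+1) i * 4^m := by
      intro j hj
      obtain ⟨c, j', hc, hb⟩ := chain_lem e W hW0 hWpos hWneg (l+1) i j
      rw [hc, norm_smul, e.orthonormal.1 j', mul_one]
      simp only [hs_def, Finset.mem_Icc] at hj
      have h1 : ‖c‖ ≤ ‖c‖ * GW j' := le_mul_of_one_le_right (norm_nonneg c) (GW_ge_one j')
      have h2 : GW j ≤ 4^m := GW_le_pow hj.1
      have h3 : FW (l+1) i * GW j ≤ FW (l+1) i * 4^m :=
        mul_le_mul_of_nonneg_left h2 (FW_nonneg _ _)
      linarith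
    refine (Finset.sum_le_sum hpt).trans ?_
    rw [Finset.sum_const, nsmul_eq_mul]
  have hiN : (0:ℤ) ≤ i + ((-i).toNat : ℤ) := by omega
  set N : ℕ := (-i).toNat with hN_def
  set C : ℝ := (s.card : ℝ) * 4^m * (4^N * (((i:ℝ) + (N:ℝ)) + 1)) with hC_def
  have hiNr : (0:ℝ) ≤ (i:ℝ) + (N:ℝ) := by exact_mod_cast hiN
  rw [← summable_nat_add_iff N]
  have hsum : Summable (fun n : ℕ => (C/((n:ℝ)+1))^2) := by
    have h0 : Summable (fun n : ℕ => 1/((n:ℝ)^2)) :=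
      Real.summable_one_div_nat_pow.mpr one_lt_two
    have h1 := (summable_nat_add_iff 1).mpr h0
    have h2 := h1.mul_left (C^2)
    refine h2.congr fun n => ?_
    have hcast : (((n+1:ℕ)):ℝ) = (n:ℝ)+1 := by push_cast; ring
    rw [hcast, div_pow, mul_one_div]
  apply Summable.of_nonneg_of_le (fun n => by positivity) ?_ hsum
  intro n
  have hb := key (n + N)
  have hF : FW (n+N+1) i ≤ 4^N * (((i:ℝ)+(N:ℝ)+1)/((n:ℝ)+1)) := by
    have h1 : FW (N + (n+1)) i ≤ 4^N * FW (n+1) (i + (N:ℤ)) := FW_le_pow N (n+1) i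
    rw [(by omega : N + (n+1) = n+N+1)] at h1
    rw [FW_eq (n+1) (i + (N:ℤ)) hiN] at h1
    have h2 : (((i + (N:ℤ)):ℤ):ℝ) = (i:ℝ) + (N:ℝ) := by push_cast; ring
    rw [h2] at h1
    refine h1.trans ?_
    apply mul_le_mul_of_nonneg_left _ (by positivity : (0:ℝ) ≤ 4^N)
    apply div_le_div_of_nonneg_left (by linarith) (by positivity)
    push_cast; linarith
  have hfinal : ‖(((List.range ((n+N) + 1)).map
      (fun t : ℕ => W (i + (((n+N) : ℤ) + 1) - (t : ℤ)))).prod) * P m‖ ≤ C/((n:ℝ)+1) := by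
    refine hb.trans ?_
    calc (s.card : ℝ) * (FW (n+N+1) i * 4^m)
        ≤ (s.card : ℝ) * ((4^N * (((i:ℝ)+(N:ℝ)+1)/((n:ℝ)+1))) * 4^m) := by
          apply mul_le_mul_of_nonneg_left _ (by positivity)
          exact mul_le_mul_of_nonneg_right hF (by positivity)
      _ = C/((n:ℝ)+1) := by rw [hC_def]; ring
  calc ‖(((List.range ((n+N) + 1)).map
        (fun t : ℕ => W (i + (((n+N) : ℤ) + 1) - (t : ℤ)))).prod) * P m‖ ^ 2
      ≤ (C/((n:ℝ)+1))^2 := pow_le_pow_left₀ (norm_nonneg _) hfinal 2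
end

section
/- Let X be a separable Banach space and T a bounded operator on X. Suppose there exist a dense subset X₀ of X and a map S : X₀ → X₀ such that for every x ∈ X₀: (i) ∑_{n=0}^∞ T^n x converges unconditionally, (ii) ∑_{n=0}^∞ S^n x converges unconditionally, and (iii) T S x = x. Then T is topologically mixing: for all nonempty open sets U, V ⊆ X, the set {n ∈ ℕ : T^n(U) ∩ V ≠ ∅} is cofinite. -/
open Filter Topology

theorem stmt9
    {X : Type*} [NormedAddCommGroup X] [NormedSpace ℂ X] [CompleteSpace X]
    [TopologicalSpace.SeparableSpace X]
    (T : X →L[ℂ] X) (X₀ : Set X) (hdense : Dense X₀)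
    (S : X → X) (hS : Set.MapsTo S X₀ X₀)
    (h₁ : ∀ x ∈ X₀, Summable (fun n : ℕ => (T ^ n) x))
    (h₂ : ∀ x ∈ X₀, Summable (fun n : ℕ => S^[n] x))
    (h₃ : ∀ x ∈ X₀, T (S x) = x) :
    ∀ U V : Set X, IsOpen U → IsOpen V → U.Nonempty → V.Nonempty →
      {n : ℕ | ¬ ∃ u ∈ U, (T ^ n) u ∈ V}.Finite := by
  intro U V hU hV hUne hVne
  obtain ⟨x, hxX₀, hxU⟩ := hdense.exists_mem_open hU hUne
  obtain ⟨y, hyX₀, hyV⟩ := hdense.exists_mem_open hV hVne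
  have hTx : Tendsto (fun n : ℕ => (T ^ n) x) atTop (𝓝 0) :=
    (h₁ x hxX₀).tendsto_atTop_zero
  have hSy : Tendsto (fun n : ℕ => S^[n] y) atTop (𝓝 0) :=
    (h₂ y hyX₀).tendsto_atTop_zero
  have hiter : ∀ n, S^[n] y ∈ X₀ := fun n => hS.iterate n hyX₀
  have key : ∀ n, (T ^ n) (S^[n] y) = y := by
    intro n
    induction n with
    | zero => simp
    | succ n ih =>
      rw [Function.iterate_succ_apply', pow_succ]
      simp only [ContinuousLinearMap.mul_apply]
      rw [h₃ _ (hiter n)]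
      exact ih
  have h1 : Tendsto (fun n : ℕ => x + S^[n] y) atTop (𝓝 x) := by
    simpa using tendsto_const_nhds.add hSy
  have h2 : Tendsto (fun n : ℕ => (T ^ n) (x + S^[n] y)) atTop (𝓝 y) := by
    have e : ∀ n, (T ^ n) (x + S^[n] y) = (T ^ n) x + y := by
      intro n; rw [map_add, key]
    simp only [e]
    simpa using hTx.add tendsto_const_nhds
  have hev : ∀ᶠ n in atTop, ∃ u ∈ U, (T ^ n) u ∈ V := by
    filter_upwards [h1.eventually (hU.mem_nhds hxU), h2.eventually (hV.mem_nhds hyV)]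
      with n hn1 hn2
    exact ⟨_, hn1, hn2⟩
  rw [← Nat.cofinite_eq_atTop] at hev
  exact Filter.eventually_cofinite.mp hev
end

section
/- Let X be a separable Banach space and T a bounded operator on X satisfying the Frequent Hypercyclicity Criterion (there exist a dense X₀ ⊆ X and S : X₀ → X₀ with ∑ T^n x and ∑ S^n x unconditionally convergent and TSx = x for all x ∈ X₀). Then T has a dense set of periodic points. -/
open Filter Topology

set_option maxHeartbeats 1000000

private lemma aux_norm_tsum {X : Type*} [NormedAddCommGroup X] [CompleteSpace X]
    (f : ℕ → X) (m : ℕ → ℕ) (hm : Function.Injective m)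
    (s : Finset ℕ) (hdis : ∀ k, m k ∉ s) {ε : ℝ}
    (hv : ∀ t : Finset ℕ, Disjoint t s → ‖∑ i ∈ t, f i‖ ≤ ε)
    (hsum : Summable (fun k => f (m k))) : ‖∑' k, f (m k)‖ ≤ ε := by
  have ha := hsum.hasSum
  have htends : Tendsto (fun t : Finset ℕ => ‖∑ k ∈ t, f (m k)‖) atTop
      (𝓝 ‖∑' k, f (m k)‖) := (continuous_norm.tendsto _).comp ha
  refine le_of_tendsto' htends ?_
  intro t
  have : ∑ k ∈ t, f (m k) = ∑ i ∈ t.image m, f i := by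
    rw [Finset.sum_image (fun a _ b _ h => hm h)]
  rw [this]
  refine hv _ ?_
  rw [Finset.disjoint_left]
  intro i hi
  obtain ⟨k, _, rfl⟩ := Finset.mem_image.mp hi
  exact hdis k

theorem stmt10
    {X : Type*} [NormedAddCommGroup X] [NormedSpace ℂ X] [CompleteSpace X]
    [TopologicalSpace.SeparableSpace X]
    (T : X →L[ℂ] X) (X₀ : Set X) (hdense : Dense X₀)
    (S : X → X) (hS : Set.MapsTo S X₀ X₀)
    (h₁ : ∀ x ∈ X₀, Summable (fun n : ℕ => (T ^ n) x))
    (h₂ : ∀ x ∈ X₀, Summable (fun n : ℕ => S^[n] x))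
    (h₃ : ∀ x ∈ X₀, T (S x) = x) :
    Dense {p : X | ∃ N : ℕ, 1 ≤ N ∧ (T ^ N) p = p} := by
  -- key: T^m (S^[m] y) = y for y ∈ X₀
  have hiterX₀ : ∀ (m : ℕ) {y : X}, y ∈ X₀ → S^[m] y ∈ X₀ := by
    intro m y hy
    exact Set.MapsTo.iterate hS m hy
  have hTS : ∀ (m : ℕ) {y : X}, y ∈ X₀ → (T ^ m) (S^[m] y) = y := by
    intro m
    induction m with
    | zero => intro y _; simp
    | succ n ih =>
      intro y hy
      rw [Function.iterate_succ_apply', pow_succ, ContinuousLinearMap.mul_apply,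
        h₃ _ (hiterX₀ n hy)]
      exact ih hy
  rw [Metric.dense_iff]
  intro y ε hε
  -- pick x ∈ X₀ close to y
  obtain ⟨x, hxball, hxX₀⟩ := Metric.dense_iff.mp hdense y (ε/3) (by positivity)
  -- vanishing for the two series
  have hT := h₁ x hxX₀
  have hSx := h₂ x hxX₀
  have he : Metric.closedBall (0 : X) (ε/3) ∈ 𝓝 (0 : X) :=
    Metric.closedBall_mem_nhds 0 (by positivity)
  obtain ⟨s₁, hs₁⟩ := summable_iff_vanishing.mp hT _ he
  obtain ⟨s₂, hs₂⟩ := summable_iff_vanishing.mp hSx _ he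
  set N : ℕ := (s₁ ∪ s₂).sup id + 1 with hN
  have hN1 : 1 ≤ N := Nat.le_add_left 1 _
  have hbig : ∀ i ∈ s₁ ∪ s₂, i < N := by
    intro i hi
    exact Nat.lt_succ_of_le (Finset.le_sup (f := id) hi)
  have hinj : Function.Injective (fun k : ℕ => (k + 1) * N) := by
    intro a b h
    simpa using Nat.eq_of_mul_eq_mul_right (Nat.lt_of_lt_of_le Nat.zero_lt_one hN1) h
  have hnotmem : ∀ k : ℕ, (k + 1) * N ∉ s₁ ∪ s₂ := by
    intro k hk
    have := hbig _ hk
    have hge : N ≤ (k + 1) * N := Nat.le_mul_of_pos_left N (Nat.succ_pos k)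
    omega
  -- summability of the shifted series
  have hsumA : Summable (fun k : ℕ => (T ^ ((k + 1) * N)) x) := hT.comp_injective hinj
  have hsumB : Summable (fun k : ℕ => S^[(k + 1) * N] x) := hSx.comp_injective hinj
  set tA : X := ∑' k : ℕ, (T ^ ((k + 1) * N)) x with htA
  set tB : X := ∑' k : ℕ, S^[(k + 1) * N] x with htB
  set p : X := x + tA + tB with hp
  -- norm bounds on the tails
  have hAle : ‖tA‖ ≤ ε/3 := by
    refine aux_norm_tsum (fun n => (T ^ n) x) _ hinj (s₁ ∪ s₂) hnotmem ?_ hsumA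
    intro t ht
    have := hs₁ t (ht.mono_right Finset.subset_union_left)
    simpa [Metric.mem_closedBall, dist_zero_right] using this
  have hBle : ‖tB‖ ≤ ε/3 := by
    refine aux_norm_tsum (fun n => S^[n] x) _ hinj (s₁ ∪ s₂) hnotmem ?_ hsumB
    intro t ht
    have := hs₂ t (ht.mono_right Finset.subset_union_right)
    simpa [Metric.mem_closedBall, dist_zero_right] using this
  -- p is periodic with period N
  have hper : (T ^ N) p = p := by
    have hmapA : (T ^ N) tA = ∑' k : ℕ, (T ^ ((k + 2) * N)) x := by
      rw [htA, ContinuousLinearMap.map_tsum _ hsumA]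
      congr 1; funext k
      rw [← ContinuousLinearMap.mul_apply, ← pow_add]
      congr 2; ring
    have hmapB : (T ^ N) tB = ∑' k : ℕ, S^[k * N] x := by
      rw [htB, ContinuousLinearMap.map_tsum _ hsumB]
      congr 1; funext k
      have : (k + 1) * N = N + k * N := by ring
      rw [this, Function.iterate_add_apply]
      exact hTS N (hiterX₀ (k * N) hxX₀)
    have hsumA' : Summable (fun k : ℕ => (T ^ ((k + 1) * N)) x) := hsumA
    have hshiftA : tA = (T ^ N) x + ∑' k : ℕ, (T ^ ((k + 2) * N)) x := by
      rw [htA, Summable.tsum_eq_zero_add hsumA']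
      norm_num
    have hsumB0 : Summable (fun k : ℕ => S^[k * N] x) := by
      have : Summable (fun k : ℕ => S^[(k : ℕ) * N] x) :=
        hSx.comp_injective (fun a b h => by
          simpa using Nat.eq_of_mul_eq_mul_right (Nat.lt_of_lt_of_le Nat.zero_lt_one hN1) h)
      exact this
    have hshiftB : (∑' k : ℕ, S^[k * N] x) = x + tB := by
      rw [Summable.tsum_eq_zero_add hsumB0]
      simp [htB]
    calc (T ^ N) p = (T ^ N) x + (T ^ N) tA + (T ^ N) tB := by
          rw [hp]; simp [map_add]
      _ = (T ^ N) x + (∑' k : ℕ, (T ^ ((k + 2) * N)) x) + (x + tB) := by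
          rw [hmapA, hmapB, hshiftB]
      _ = tA + (x + tB) := by rw [hshiftA]
      _ = p := by rw [hp]; abel
  refine ⟨p, ?_, ⟨N, hN1, hper⟩⟩
  rw [Metric.mem_ball]
  have : dist p x ≤ ε/3 + ε/3 := by
    have : p - x = tA + tB := by rw [hp]; abel
    rw [dist_eq_norm, this]
    exact (norm_add_le _ _).trans (add_le_add hAle hBle)
  have hdx : dist x y < ε/3 := by simpa [Metric.mem_ball] using hxball
  calc dist p y ≤ dist p x + dist x y := dist_triangle _ _ _
    _ < (ε/3 + ε/3) + ε/3 := by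
        have := hdx
        linarith
    _ = ε := by ring
end
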